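/- Let alpha in F_{q^{mn}} satisfy F_{q^{mn}} = F_q(alpha). The F_q-span Lambda of {1, alpha^n, alpha^{2n}, ..., alpha^{(m-1)n}} is an m-dimensional alpha-splitting subspace of F_{q^{mn}}. -/

import Mathlib

open Pointwise

/-- `W` is an `α`-splitting subspace: the whole space is the internal direct sum
`W ⊕ αW ⊕ ⋯ ⊕ α^(n-1)W`. -/
def IsSplitting {F E : Type*} [Field F] [Field E] [Algebra F E]
    (n : ℕ) (α : E) (W : Submodule F E) : Prop :=
  DirectSum.IsInternal (fun i : Fin n => α ^ (i : ℕ) • W)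

theorem stmt6 (F E : Type*) [Field F] [Fintype F] [Field E] [Algebra F E]
    (m n : ℕ) (hm : 0 < m) (hn : 0 < n) (hdim : Module.finrank F E = m * n)
    (α : E) (hα : Algebra.adjoin F {α} = ⊤) :
    Module.finrank F (Submodule.span F (Set.range fun i : Fin m => α ^ (n * (i : ℕ)))) = m ∧
    IsSplitting n α (Submodule.span F (Set.range fun i : Fin m => α ^ (n * (i : ℕ)))) := by
  have hfd : FiniteDimensional F E := FiniteDimensional.of_finrank_pos (hdim ▸ Nat.mul_pos hm hn)
  have hint : IsIntegral F α := Algebra.IsIntegral.isIntegral α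
  set pb : PowerBasis F E :=
    (Algebra.adjoin.powerBasis hint).map
      ((Subalgebra.equivOfEq _ _ hα).trans Subalgebra.topEquiv) with hpb
  have hgen : pb.gen = α := rfl
  have hdimpb : pb.dim = m * n := by rw [← pb.finrank, hdim]
  set b : Module.Basis (Fin (m * n)) F E := pb.basis.reindex (finCongr hdimpb) with hb
  have hbk : ∀ k : Fin (m * n), b k = α ^ (k : ℕ) := by
    intro k
    simp [hb, Module.Basis.reindex_apply, pb.basis_eq_pow, hgen]
  have hli : LinearIndependent F (⇑b) := b.linearIndependent
  -- indices
  set e : Fin n → Fin m → Fin (m * n) := fun j i =>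
    ⟨(j : ℕ) + n * (i : ℕ), by
      calc (j : ℕ) + n * (i : ℕ) < n + n * (i : ℕ) := by omega
        _ = n * ((i : ℕ) + 1) := by ring
        _ ≤ n * m := Nat.mul_le_mul_left n i.isLt
        _ = m * n := Nat.mul_comm n m⟩ with he
  set S : Fin n → Set (Fin (m * n)) := fun j => Set.range (e j) with hS
  have hW : ∀ j : Fin n,
      α ^ (j : ℕ) • Submodule.span F (Set.range fun i : Fin m => α ^ (n * (i : ℕ)))
        = Submodule.span F (⇑b '' S j) := by
    intro j
    rw [Submodule.smul_span]
    congr 1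
    rw [hS, ← Set.range_comp, Set.smul_set_range]
    apply congrArg
    funext i
    simp only [Function.comp_apply, hbk, he, smul_eq_mul, ← pow_add]
  have hdisj : ∀ j : Fin n, Disjoint (S j) (⋃ (k : Fin n) (_ : k ≠ j), S k) := by
    intro j
    rw [Set.disjoint_left]
    rintro x ⟨i, rfl⟩ hx
    simp only [Set.mem_iUnion, hS, Set.mem_range] at hx
    obtain ⟨k, hkj, i', hi'⟩ := hx
    have hval : (k : ℕ) + n * (i' : ℕ) = (j : ℕ) + n * (i : ℕ) := congrArg Fin.val hi'
    have h1 : ((k : ℕ) + n * (i' : ℕ)) % n = (k : ℕ) % n := Nat.add_mul_mod_self_left _ _ _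
    have h2 : ((j : ℕ) + n * (i : ℕ)) % n = (j : ℕ) % n := Nat.add_mul_mod_self_left _ _ _
    rw [hval, h2, Nat.mod_eq_of_lt j.isLt, Nat.mod_eq_of_lt k.isLt] at h1
    exact hkj (Fin.ext h1.symm)
  have hcover : (⋃ j, S j) = Set.univ := by
    ext k
    simp only [Set.mem_iUnion, Set.mem_univ, iff_true, hS, Set.mem_range]
    refine ⟨⟨(k : ℕ) % n, Nat.mod_lt _ hn⟩, ⟨(k : ℕ) / n, ?_⟩, ?_⟩
    · exact (Nat.div_lt_iff_lt_mul hn).mpr k.isLt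
    · apply Fin.ext
      simp [he, Nat.mod_add_div]
  constructor
  · have hli2 : LinearIndependent F (fun i : Fin m => α ^ (n * (i : ℕ))) := by
      have hg : Function.Injective (fun i : Fin m => e ⟨0, hn⟩ i) := by
        intro i i' hii'
        have : (0 : ℕ) + n * (i : ℕ) = 0 + n * (i' : ℕ) := congrArg Fin.val hii'
        exact Fin.ext (Nat.eq_of_mul_eq_mul_left hn (by omega))
      have := hli.comp _ hg
      convert this using 1
      funext i
      simp only [Function.comp_apply, hbk, he]
      rw [Nat.zero_add]
    rw [finrank_span_eq_card hli2, Fintype.card_fin]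
  · rw [IsSplitting]
    apply DirectSum.isInternal_submodule_of_iSupIndep_of_iSup_eq_top
    · rw [iSupIndep_def]
      intro j
      simp only [hW]
      have heq : (⨆ (k : Fin n) (_ : k ≠ j), Submodule.span F (⇑b '' S k))
          = Submodule.span F (⇑b '' ⋃ (k : Fin n) (_ : k ≠ j), S k) := by
        simp_rw [Set.image_iUnion, Submodule.span_iUnion]
      rw [heq]
      exact hli.disjoint_span_image (hdisj j)
    · simp only [hW]
      rw [← Submodule.span_iUnion, ← Set.image_iUnion, hcover, Set.image_univ, b.span_eq]
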